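/- For all real x, y and probability measures μ, ν on R with finite 6th moments, letting m_μ = ∫x dμ, m_ν = ∫y dν, b(x,μ) = −18x⁵ − x^{1/3}m_μ⁴ + 2 and σ(x,μ) = x² + m_μ, one has 2(x−y)(b(x,μ)−b(y,ν)) + (σ(x,μ)−σ(y,ν))² ≤ (2 + |y|^{2/3} + 2‖μ‖₆⁶ + 2‖ν‖₆⁶)(|x−y|² + W₂²(μ,ν)). -/

import Mathlib

open MeasureTheory

/-- The `p`-Wasserstein distance defined as an infimum over couplings. -/
noncomputable def wasserstein {E : Type*} [NormedAddCommGroup E] [MeasurableSpace E]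
    (p : ℝ) (μ ν : Measure E) : ℝ :=
  sInf {r : ℝ | ∃ π : Measure (E × E), π.map Prod.fst = μ ∧ π.map Prod.snd = ν ∧
    r = (∫ z, ‖z.1 - z.2‖ ^ p ∂π) ^ (1 / p)}

/-- The real cube root. -/
noncomputable def cbrt (x : ℝ) : ℝ := Real.sign x * |x| ^ ((1 : ℝ) / 3)

lemma polyIneq (x y t : ℝ) (ht6 : t^6 = y^2) :
    -36*(x^4+x^3*y+x^2*y^2+x*y^3+y^4) + 2*(x+y)^2 + 3*t^2 ≤ 2 := by
  have h1 : 3*t^2 ≤ 14/9 + (81/49)*t^6 := by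
    nlinarith [mul_nonneg (sq_nonneg (t^2 - 7/9)) (by positivity : (0:ℝ) ≤ t^2 + 14/9)]
  have h2 : -36*(x^4+x^3*y+x^2*y^2+x*y^3+y^4) + 2*(x+y)^2 + (81/49)*y^2 ≤ 4/9 := by
    nlinarith [sq_nonneg (x+y), sq_nonneg (x-y), sq_nonneg (x^2+y^2), sq_nonneg (x^2-y^2),
      sq_nonneg (x^2+x*y+y^2), sq_nonneg (x*y), sq_nonneg (x^2+y^2-1/3),
      sq_nonneg (x^2+y^2+x*y-1/3), sq_nonneg x, sq_nonneg y]
  rw [ht6] at h1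
  linarith

lemma Tbound (a c : ℝ) : (a^3+a^2*c+a*c^2+c^3)^2 ≤ 8*(a^6+c^6) := by
  nlinarith [sq_nonneg (a-c), sq_nonneg (a+c), sq_nonneg (a^2-c^2), sq_nonneg (a*c),
    sq_nonneg (a^2+c^2), mul_nonneg (sq_nonneg (a-c)) (sq_nonneg (a+c)),
    mul_nonneg (mul_nonneg (sq_nonneg (a-c)) (sq_nonneg (a+c))) (sq_nonneg (a*c)),
    mul_nonneg (sq_nonneg (a-c)) (sq_nonneg (a^2+c^2)), sq_nonneg (a^3-c^3), sq_nonneg (a^3+c^3)]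

lemma absYoung (p q D S : ℝ) (hp : |p| ≤ D) (hq : |q| ≤ S) :
    -2*(p*q) ≤ 4*D^2 + S^2/4 := by
  have hD : 0 ≤ D := (abs_nonneg p).trans hp
  have h1 : -(p*q) ≤ abs p * abs q := by rw [← abs_mul]; exact neg_le_abs (p*q)
  have h2 : abs p * abs q ≤ D*S := mul_le_mul hp hq (abs_nonneg _) hD
  nlinarith [sq_nonneg (2*D - S/2)]

set_option maxHeartbeats 1000000 in
/-- The key scalar inequality. -/
lemma key (x y a c t M1 M2 W cbx cby : ℝ)
    (ht : 0 ≤ t) (ht6 : t ^ 6 = y ^ 2)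
    (ha : a ^ 6 ≤ M1) (hc : c ^ 6 ≤ M2) (hM1 : 0 ≤ M1) (hM2 : 0 ≤ M2)
    (hW : |a - c| ≤ W)
    (hmono : 0 ≤ (x - y) * (cbx - cby)) (hcby : |cby| ≤ t) :
    2*(x-y)*((-18*x^5 - cbx*a^4 + 2) - (-18*y^5 - cby*c^4 + 2)) + ((x^2+a)-(y^2+c))^2
      ≤ (2 + t^2 + 2*M1 + 2*M2) * ((x-y)^2 + W^2) := by
  have hW0 : 0 ≤ W := le_trans (abs_nonneg _) hW
  have he2 : (a - c)^2 ≤ W^2 := by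
    have h := sq_abs (a - c)
    nlinarith [abs_nonneg (a - c)]
  have hB1 : -2*((x-y)*(cbx-cby))*a^4 ≤ 0 := by
    have ha4 : (0:ℝ) ≤ a^4 := by positivity
    nlinarith [mul_nonneg hmono ha4]
  have habs1 : |(x-y)*cby| ≤ |x-y| * t := by
    rw [abs_mul]
    exact mul_le_mul_of_nonneg_left hcby (abs_nonneg _)
  have habs2 : |(a-c)*(a^3+a^2*c+a*c^2+c^3)| ≤ W * |a^3+a^2*c+a*c^2+c^3| := by
    rw [abs_mul]
    exact mul_le_mul_of_nonneg_right hW (abs_nonneg _)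
  have hB2 : -2*(x-y)*cby*(a^4 - c^4) ≤ 4*t^2*(x-y)^2 + (2*a^6 + 2*c^6)*W^2 := by
    have e0 := absYoung ((x-y)*cby) ((a-c)*(a^3+a^2*c+a*c^2+c^3))
      (|x-y| * t) (W * |a^3+a^2*c+a*c^2+c^3|) habs1 habs2
    have e5 : 4*(|x-y| * t)^2 = 4*t^2*(x-y)^2 := by rw [mul_pow, sq_abs]; ring
    have e6 : (W * |a^3+a^2*c+a*c^2+c^3|)^2/4 ≤ (2*a^6+2*c^6)*W^2 := by
      rw [mul_pow, sq_abs]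
      nlinarith [mul_le_mul_of_nonneg_left (Tbound a c) (sq_nonneg W)]
    calc -2*(x-y)*cby*(a^4 - c^4)
        = -2*(((x-y)*cby) * ((a-c)*(a^3+a^2*c+a*c^2+c^3))) := by ring
      _ ≤ 4*(|x-y| * t)^2 + (W * |a^3+a^2*c+a*c^2+c^3|)^2/4 := e0
      _ ≤ 4*t^2*(x-y)^2 + (2*a^6 + 2*c^6)*W^2 := by rw [e5]; linarith
  have hS : ((x^2+a)-(y^2+c))^2 ≤ 2*(x+y)^2*(x-y)^2 + 2*W^2 := by
    nlinarith [sq_nonneg ((x^2-y^2) - (a-c))]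
  have hpoly := polyIneq x y t ht6
  have hd2 : (-36*(x^4+x^3*y+x^2*y^2+x*y^3+y^4) + 2*(x+y)^2 + 4*t^2) * (x-y)^2
      ≤ (2 + t^2 + 2*M1 + 2*M2) * (x-y)^2 := by
    apply mul_le_mul_of_nonneg_right _ (sq_nonneg _)
    linarith
  have hw2 : (2 + 2*a^6 + 2*c^6) * W^2 ≤ (2 + t^2 + 2*M1 + 2*M2) * W^2 := by
    apply mul_le_mul_of_nonneg_right _ (sq_nonneg _)
    nlinarith [sq_nonneg t]
  linarith [hB1, hB2, hS, hd2, hw2, sq_nonneg (x-y), sq_nonneg W]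

lemma cbrt_pow_three (x : ℝ) : cbrt x ^ 3 = x := by
  unfold cbrt
  rw [mul_pow]
  have h1 : (|x| ^ ((1:ℝ)/3)) ^ (3:ℕ) = |x| := by
    rw [← Real.rpow_natCast (|x| ^ ((1:ℝ)/3)) 3, ← Real.rpow_mul (abs_nonneg x)]
    norm_num
  rw [h1]
  rcases lt_trichotomy x 0 with h|h|h
  · rw [Real.sign_of_neg h, abs_of_neg h]; ring
  · simp [h, Real.sign_zero]
  · rw [Real.sign_of_pos h, abs_of_pos h]; ring

lemma cbrt_mono : Monotone cbrt := by
  intro u v huv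
  by_contra hlt
  push_neg at hlt
  have h3 : cbrt v ^ 3 < cbrt u ^ 3 := Odd.strictMono_pow (by decide) hlt
  rw [cbrt_pow_three, cbrt_pow_three] at h3
  exact absurd huv (not_le.mpr h3)

lemma abs_cbrt_le (y : ℝ) : |cbrt y| ≤ |y| ^ ((1:ℝ)/3) := by
  unfold cbrt
  rw [abs_mul, abs_of_nonneg (Real.rpow_nonneg (abs_nonneg y) _)]
  have hs : |Real.sign y| ≤ 1 := by
    rcases Real.sign_apply_eq y with h|h|h <;> rw [h] <;> norm_num
  nlinarith [Real.rpow_nonneg (abs_nonneg y) ((1:ℝ)/3), abs_nonneg (Real.sign y)]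

section meas
variable {α : Type*} [MeasurableSpace α] (μ : Measure α)

lemma jensen_pow [IsProbabilityMeasure μ] (f : α → ℝ) (n : ℕ) (hn : Even n)
    (hf : Integrable f μ) (hfn : Integrable (fun x => f x ^ n) μ) :
    (∫ x, f x ∂μ) ^ n ≤ ∫ x, f x ^ n ∂μ :=
  (hn.convexOn_pow).map_integral_le (continuous_pow n).continuousOn isClosed_univ
    (Filter.Eventually.of_forall fun _ => Set.mem_univ _) hf hfn

end meas

lemma integrable_id_of_six (μ : Measure ℝ) [IsProbabilityMeasure μ]
    (h6 : Integrable (fun z => |z| ^ (6 : ℕ)) μ) : Integrable (fun z : ℝ => z) μ := by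
  refine (h6.add (integrable_const 1)).mono' measurable_id.aestronglyMeasurable ?_
  filter_upwards with z
  simp only [Real.norm_eq_abs, Pi.add_apply]
  show |z| ≤ |z| ^ 6 + 1
  rcases le_or_gt (|z|) 1 with h|h
  · have : (0:ℝ) ≤ |z| ^ 6 := by positivity
    linarith
  · have h1 : |z| ≤ |z| ^ 6 := le_self_pow₀ h.le (by norm_num)
    linarith

lemma integrable_sq_of_six (μ : Measure ℝ) [IsProbabilityMeasure μ]
    (h6 : Integrable (fun z => |z| ^ (6 : ℕ)) μ) : Integrable (fun z : ℝ => z ^ 2) μ := by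
  refine (h6.add (integrable_const 1)).mono' (measurable_id.pow_const 2).aestronglyMeasurable ?_
  filter_upwards with z
  simp only [Real.norm_eq_abs, Pi.add_apply, abs_pow, sq_abs]
  show z ^ 2 ≤ |z| ^ 6 + 1
  rcases le_or_gt (|z|) 1 with h|h
  · have h2 : z^2 ≤ 1 := by nlinarith [sq_abs z, abs_nonneg z]
    have : (0:ℝ) ≤ |z| ^ 6 := by positivity
    nlinarith [sq_nonneg z]
  · have h1 : |z|^2 ≤ |z| ^ 6 := pow_le_pow_right₀ h.le (by norm_num)
    rw [sq_abs] at h1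
    linarith

lemma moment_bound (μ : Measure ℝ) [IsProbabilityMeasure μ]
    (h6 : Integrable (fun z => |z| ^ (6 : ℕ)) μ) :
    (∫ z, z ∂μ) ^ 6 ≤ ∫ z, |z| ^ (6 : ℕ) ∂μ := by
  have h6' : Integrable (fun z : ℝ => z ^ (6:ℕ)) μ := by
    have : (fun z : ℝ => z ^ (6:ℕ)) = fun z : ℝ => |z| ^ (6:ℕ) := by
      funext z; rw [Even.pow_abs (by decide)]
    rw [this]; exact h6
  have := jensen_pow μ (fun z => z) 6 (by decide) (integrable_id_of_six μ h6) h6'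
  calc (∫ z, z ∂μ) ^ 6 ≤ ∫ z, z ^ (6:ℕ) ∂μ := this
    _ = ∫ z, |z| ^ (6:ℕ) ∂μ := by
        refine integral_congr_ae (Filter.Eventually.of_forall fun z => ?_)
        show z ^ 6 = |z| ^ 6
        rw [Even.pow_abs (by decide)]

lemma abs_sub_integral_le_wasserstein (μ ν : Measure ℝ)
    [hμ : IsProbabilityMeasure μ] [hν : IsProbabilityMeasure ν]
    (h6μ : Integrable (fun z => |z| ^ (6 : ℕ)) μ)
    (h6ν : Integrable (fun z => |z| ^ (6 : ℕ)) ν) :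
    |(∫ z, z ∂μ) - ∫ z, z ∂ν| ≤ wasserstein 2 μ ν := by
  have hidμ : Integrable (fun z : ℝ => z) μ := integrable_id_of_six μ h6μ
  have hidν : Integrable (fun z : ℝ => z) ν := integrable_id_of_six ν h6ν
  have hsqμ : Integrable (fun z : ℝ => z ^ 2) μ := integrable_sq_of_six μ h6μ
  have hsqν : Integrable (fun z : ℝ => z ^ 2) ν := integrable_sq_of_six ν h6ν
  unfold wasserstein
  apply le_csInf
  · refine ⟨_, μ.prod ν, ?_, ?_, rfl⟩
    · simp [Measure.map_fst_prod]
    · simp [Measure.map_snd_prod]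
  · rintro r ⟨π, hπ1, hπ2, rfl⟩
    have hπprob : IsProbabilityMeasure π := by
      constructor
      have h : (π.map Prod.fst) Set.univ = 1 := by rw [hπ1]; exact measure_univ
      rwa [Measure.map_apply measurable_fst MeasurableSet.univ, Set.preimage_univ] at h
    have h1 : Integrable (fun z : ℝ × ℝ => z.1) π := by
      have := (integrable_map_measure aestronglyMeasurable_id
        measurable_fst.aemeasurable).mp (by rw [hπ1]; exact hidμ)
      simpa [Function.comp] using this
    have h2 : Integrable (fun z : ℝ × ℝ => z.2) π := by
      have := (integrable_map_measure aestronglyMeasurable_id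
        measurable_snd.aemeasurable).mp (by rw [hπ2]; exact hidν)
      simpa [Function.comp] using this
    have hsq1 : Integrable (fun z : ℝ × ℝ => z.1 ^ 2) π := by
      have := (integrable_map_measure (aestronglyMeasurable_id.pow 2)
        measurable_fst.aemeasurable).mp (by rw [hπ1]; exact hsqμ)
      exact this
    have hsq2 : Integrable (fun z : ℝ × ℝ => z.2 ^ 2) π := by
      have := (integrable_map_measure (aestronglyMeasurable_id.pow 2)
        measurable_snd.aemeasurable).mp (by rw [hπ2]; exact hsqν)
      exact this
    have hsub : Integrable (fun z : ℝ × ℝ => z.1 - z.2) π := h1.sub h2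
    have hsq : Integrable (fun z : ℝ × ℝ => (z.1 - z.2) ^ 2) π := by
      refine ((hsq1.const_mul 2).add (hsq2.const_mul 2)).mono'
        ((measurable_fst.sub measurable_snd).pow_const 2).aestronglyMeasurable ?_
      filter_upwards with z
      simp only [Real.norm_eq_abs, Pi.add_apply]
      rw [abs_of_nonneg (sq_nonneg _)]
      nlinarith [sq_nonneg (z.1 + z.2)]
    have hI : (∫ z : ℝ × ℝ, ‖z.1 - z.2‖ ^ (2:ℝ) ∂π) = ∫ z : ℝ × ℝ, (z.1 - z.2) ^ 2 ∂π := by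
      refine integral_congr_ae (Filter.Eventually.of_forall fun z => ?_)
      show ‖z.1 - z.2‖ ^ (2:ℝ) = (z.1 - z.2) ^ (2:ℕ)
      rw [show (2:ℝ) = ((2:ℕ):ℝ) by norm_num, Real.rpow_natCast, Real.norm_eq_abs, sq_abs]
    have hInn : 0 ≤ ∫ z : ℝ × ℝ, (z.1 - z.2) ^ 2 ∂π :=
      integral_nonneg fun z => sq_nonneg _
    have hjensen : (∫ z : ℝ × ℝ, |z.1 - z.2| ∂π) ^ 2 ≤ ∫ z : ℝ × ℝ, (z.1 - z.2) ^ 2 ∂π := by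
      have := jensen_pow π (fun z : ℝ × ℝ => |z.1 - z.2|) 2 (by decide) hsub.abs
        (by simpa [sq_abs] using hsq)
      simpa [sq_abs] using this
    have hμint : (∫ z, z ∂μ) = ∫ z : ℝ × ℝ, z.1 ∂π := by
      rw [← hπ1]
      exact integral_map measurable_fst.aemeasurable measurable_id.aestronglyMeasurable
    have hνint : (∫ z, z ∂ν) = ∫ z : ℝ × ℝ, z.2 ∂π := by
      rw [← hπ2]
      exact integral_map measurable_snd.aemeasurable measurable_id.aestronglyMeasurable
    have habs : |(∫ z, z ∂μ) - ∫ z, z ∂ν| ≤ ∫ z : ℝ × ℝ, |z.1 - z.2| ∂π := by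
      rw [hμint, hνint, ← integral_sub h1 h2]
      simpa [Real.norm_eq_abs] using norm_integral_le_integral_norm (fun z : ℝ × ℝ => z.1 - z.2)
    have hfin : |(∫ z, z ∂μ) - ∫ z, z ∂ν| ≤
        Real.sqrt (∫ z : ℝ × ℝ, (z.1 - z.2) ^ 2 ∂π) := by
      rw [Real.le_sqrt (abs_nonneg _) hInn]
      calc |(∫ z, z ∂μ) - ∫ z, z ∂ν| ^ 2 ≤ (∫ z : ℝ × ℝ, |z.1 - z.2| ∂π) ^ 2 := by
            apply pow_le_pow_left₀ (abs_nonneg _) habs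
        _ ≤ _ := hjensen
    rw [hI]
    rw [Real.sqrt_eq_rpow] at hfin
    exact hfin

/-- locally monotone condition for the example MVSDE with
`b(x,μ) = −18x⁵ − x^{1/3}m_μ⁴ + 2` and `σ(x,μ) = x² + m_μ`. -/
theorem locally_monotone_example (x y : ℝ) (μ ν : Measure ℝ)
    (hμ : IsProbabilityMeasure μ) (hν : IsProbabilityMeasure ν)
    (h6μ : Integrable (fun z => |z| ^ (6 : ℕ)) μ) (h6ν : Integrable (fun z => |z| ^ (6 : ℕ)) ν) :
    2 * (x - y) *
        ((-18 * x ^ 5 - cbrt x * (∫ z, z ∂μ) ^ 4 + 2) -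
          (-18 * y ^ 5 - cbrt y * (∫ z, z ∂ν) ^ 4 + 2)) +
      ((x ^ 2 + ∫ z, z ∂μ) - (y ^ 2 + ∫ z, z ∂ν)) ^ 2 ≤
      (2 + |y| ^ ((2 : ℝ) / 3) + 2 * (∫ z, |z| ^ (6 : ℕ) ∂μ) + 2 * (∫ z, |z| ^ (6 : ℕ) ∂ν)) *
        ((x - y) ^ 2 + (wasserstein 2 μ ν) ^ 2) := by
  set t : ℝ := |y| ^ ((1:ℝ)/3) with htdef
  have ht : 0 ≤ t := Real.rpow_nonneg (abs_nonneg y) _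
  have ht2 : t ^ (2:ℕ) = |y| ^ ((2:ℝ)/3) := by
    rw [htdef, ← Real.rpow_natCast (|y| ^ ((1:ℝ)/3)) 2, ← Real.rpow_mul (abs_nonneg y)]
    norm_num
  have ht6 : t ^ (6:ℕ) = y ^ 2 := by
    rw [htdef, ← Real.rpow_natCast (|y| ^ ((1:ℝ)/3)) 6, ← Real.rpow_mul (abs_nonneg y)]
    rw [show (1:ℝ)/3 * (6:ℕ) = ((2:ℕ):ℝ) by norm_num, Real.rpow_natCast, sq_abs]
  have hmono : 0 ≤ (x - y) * (cbrt x - cbrt y) := by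
    rcases le_total y x with h|h
    · have := cbrt_mono h
      have hx : 0 ≤ x - y := by linarith
      have hc : 0 ≤ cbrt x - cbrt y := by linarith
      exact mul_nonneg hx hc
    · have := cbrt_mono h
      have hx : x - y ≤ 0 := by linarith
      have hc : cbrt x - cbrt y ≤ 0 := by linarith
      nlinarith [mul_nonneg (neg_nonneg.mpr hx) (neg_nonneg.mpr hc)]
  have hcby : |cbrt y| ≤ t := abs_cbrt_le y
  have ha := moment_bound μ h6μ
  have hc := moment_bound ν h6ν
  have hM1 : 0 ≤ ∫ z, |z| ^ (6:ℕ) ∂μ := integral_nonneg fun z => by positivity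
  have hM2 : 0 ≤ ∫ z, |z| ^ (6:ℕ) ∂ν := integral_nonneg fun z => by positivity
  have hW := abs_sub_integral_le_wasserstein μ ν h6μ h6ν
  have hkey := key x y (∫ z, z ∂μ) (∫ z, z ∂ν) t (∫ z, |z| ^ (6:ℕ) ∂μ) (∫ z, |z| ^ (6:ℕ) ∂ν)
    (wasserstein 2 μ ν) (cbrt x) (cbrt y) ht ht6 ha hc hM1 hM2 hW hmono hcby
  rw [ht2] at hkey
  calc 2 * (x - y) *
        ((-18 * x ^ 5 - cbrt x * (∫ z, z ∂μ) ^ 4 + 2) -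
          (-18 * y ^ 5 - cbrt y * (∫ z, z ∂ν) ^ 4 + 2)) +
      ((x ^ 2 + ∫ z, z ∂μ) - (y ^ 2 + ∫ z, z ∂ν)) ^ 2
      = 2*(x-y)*((-18*x^5 - cbrt x*(∫ z, z ∂μ)^4 + 2) - (-18*y^5 - cbrt y*(∫ z, z ∂ν)^4 + 2)) +
        ((x^2 + ∫ z, z ∂μ) - (y^2 + ∫ z, z ∂ν))^2 := by ring
    _ ≤ (2 + |y| ^ ((2:ℝ)/3) + 2*(∫ z, |z| ^ (6:ℕ) ∂μ) + 2*(∫ z, |z| ^ (6:ℕ) ∂ν)) *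
        ((x-y)^2 + (wasserstein 2 μ ν)^2) := hkey
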